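/- Let n ≥ 2 be an integer, ε_j = e^{2πij/n}, and let t ≥ 1 and d ≥ 0 be integers. Then ∑_{j∈ℤ/nℤ} |∑_{h=0}^{t−1} (h+1)^d ε_j^h| ≤ t^{d+1} + 2^{d+1} t^d n log n. -/

import Mathlib

open Finset Real

-- harmonic bound
lemma harm_le : ∀ n : ℕ, 1 ≤ n → ∑ j ∈ Finset.Ico 1 (n+1), (1:ℝ)/j ≤ 1 + Real.log n := by
  intro n
  induction n with
  | zero => intro h; omega
  | succ m ih =>
    intro _
    rcases Nat.eq_zero_or_pos m with hm | hm
    · subst hm; simp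
    · rw [Finset.sum_Ico_succ_top (by omega)]
      have h1 := ih hm
      have h2 : (1:ℝ)/(m+1) ≤ Real.log (m+1) - Real.log m := by
        rw [← Real.log_div (by positivity) (by positivity)]
        have := Real.log_le_sub_one_of_pos (x := (m:ℝ)/(m+1)) (by positivity)
        have hlog : Real.log ((m:ℝ)/(m+1)) = - Real.log ((m+1:ℝ)/m) := by
          rw [← Real.log_inv]; congr 1; field_simp
        rw [hlog] at this
        have : -Real.log ((m+1:ℝ)/m) ≤ (m:ℝ)/(m+1) - 1 := this
        have hm1 : (m:ℝ)/(m+1) - 1 = -(1/(m+1)) := by field_simp; ring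
        rw [hm1] at this
        have := neg_le_neg this
        simp only [neg_neg] at this
        have heq : Real.log ((m+1:ℝ)/m) = Real.log (m+1) - Real.log m :=
          Real.log_div (by positivity) (by positivity)
        linarith
      push_cast
      push_cast at h1 h2
      linarith

lemma inv_sin_le (n j : ℕ) (h1 : 1 ≤ j) (h2 : j < n) :
    1 / Real.sin (π * j / n) ≤ (n:ℝ)/2 * (1/j + 1/(n-j:ℕ)) := by
  have hn : (0:ℝ) < n := by
    have : 0 < n := by omega
    exact_mod_cast this
  have hj0 : (0:ℝ) < j := by exact_mod_cast h1
  have hθpos : 0 < π * j / n := by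
    have := Real.pi_pos; positivity
  have key : (2:ℝ) * (min j (n-j) : ℕ) / n ≤ Real.sin (π * j / n) := by
    rcases le_or_gt (2*j) n with hc | hc
    · have hmin : min j (n-j) = j := by omega
      rw [hmin]
      have hle : π * j / n ≤ π / 2 := by
        rw [div_le_div_iff₀ hn (by norm_num)]
        have : (2:ℝ)*j ≤ n := by exact_mod_cast hc
        nlinarith [Real.pi_pos]
      have := Real.mul_le_sin (x := π * j / n) (le_of_lt hθpos) hle
      calc (2:ℝ)*j/n = 2/π * (π * j / n) := by field_simp
        _ ≤ Real.sin (π * j / n) := this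
    · have hmin : min j (n-j) = n - j := by omega
      rw [hmin]
      have hsin : Real.sin (π * j / n) = Real.sin (π * (n-j:ℕ) / n) := by
        have : π * (n-j:ℕ) / n = π - π * j / n := by
          have : ((n-j:ℕ):ℝ) = (n:ℝ) - j := by
            push_cast [Nat.cast_sub (le_of_lt h2)]; ring
          rw [this]; field_simp
        rw [this, Real.sin_pi_sub]
      rw [hsin]
      have hjn : (0:ℝ) < ((n-j:ℕ):ℝ) := by
        have : 0 < n - j := by omega
        exact_mod_cast this
      have hle : π * (n-j:ℕ) / n ≤ π / 2 := by
        rw [div_le_div_iff₀ hn (by norm_num)]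
        have : (2:ℝ)*((n-j:ℕ):ℝ) ≤ n := by
          have : 2*(n-j) ≤ n := by omega
          exact_mod_cast this
        nlinarith [Real.pi_pos]
      have := Real.mul_le_sin (x := π * (n-j:ℕ) / n) (by positivity) hle
      calc (2:ℝ)*(n-j:ℕ)/n = 2/π * (π * (n-j:ℕ) / n) := by field_simp
        _ ≤ Real.sin (π * (n-j:ℕ) / n) := this
  have hmpos : (0:ℝ) < ((min j (n-j) : ℕ):ℝ) := by
    have : 0 < min j (n-j) := by omega
    exact_mod_cast this
  have hsinpos : 0 < Real.sin (π * j / n) := lt_of_lt_of_le (by positivity) key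
  have step1 : 1 / Real.sin (π * j / n) ≤ (n:ℝ) / (2 * (min j (n-j):ℕ)) := by
    rw [div_le_div_iff₀ hsinpos (by positivity)]
    calc 1 * (2 * ((min j (n-j):ℕ):ℝ)) = (2 * (min j (n-j):ℕ) / n) * n := by field_simp
      _ ≤ Real.sin (π * j / n) * n :=
          mul_le_mul_of_nonneg_right key (le_of_lt hn)
      _ = n * Real.sin (π * j / n) := mul_comm _ _
  refine step1.trans ?_
  have hj : (0:ℝ) < j := by exact_mod_cast h1
  have hnj : (0:ℝ) < ((n-j:ℕ):ℝ) := by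
    have : 0 < n - j := by omega
    exact_mod_cast this
  rcases min_cases j (n-j) with ⟨hmin, _⟩ | ⟨hmin, _⟩ <;> rw [hmin]
  · rw [div_le_iff₀ (by positivity)]
    have : (n:ℝ)/2 * (1/j + 1/(n-j:ℕ)) * (2*j) = n + n*j/(n-j:ℕ) := by field_simp
    rw [this]
    have : 0 ≤ (n:ℝ)*j/(n-j:ℕ) := by positivity
    linarith
  · rw [div_le_iff₀ (by positivity)]
    have : (n:ℝ)/2 * (1/j + 1/(n-j:ℕ)) * (2*(n-j:ℕ)) = n + n*(n-j:ℕ)/j := by field_simp; ring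
    rw [this]
    have : 0 ≤ (n:ℝ)*(n-j:ℕ)/j := by positivity
    linarith

lemma norm_one_sub_exp (θ : ℝ) (hs : 0 ≤ Real.sin (θ/2)) :
    ‖1 - Complex.exp (θ * Complex.I)‖ = 2 * Real.sin (θ/2) := by
  have h1 : Complex.exp (θ * Complex.I)
      = (Real.cos θ : ℂ) + (Real.sin θ : ℂ) * Complex.I := by
    rw [Complex.exp_mul_I, Complex.ofReal_cos, Complex.ofReal_sin]
  have hre : (1 - Complex.exp (θ * Complex.I)).re = 1 - Real.cos θ := by rw [h1]; simp [Complex.cos_ofReal_re, Complex.sin_ofReal_re]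
  have him : (1 - Complex.exp (θ * Complex.I)).im = -Real.sin θ := by rw [h1]; simp [Complex.cos_ofReal_re, Complex.sin_ofReal_re]
  have hsq : ‖1 - Complex.exp (θ * Complex.I)‖^2 = (1 - Real.cos θ)^2 + (Real.sin θ)^2 := by
    rw [Complex.sq_norm, Complex.normSq_apply, hre, him]; ring
  have hcos : Real.cos θ = 1 - 2 * Real.sin (θ/2)^2 := by
    have h2 := Real.cos_two_mul' (θ/2)
    have h3 := Real.sin_sq_add_cos_sq (θ/2)
    have : (2:ℝ) * (θ/2) = θ := by ring
    rw [this] at h2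
    linarith
  have hsin2 : (Real.sin θ)^2 = 1 - (Real.cos θ)^2 := Real.sin_sq θ
  have key : ‖1 - Complex.exp (θ * Complex.I)‖^2 = (2 * Real.sin (θ/2))^2 := by
    rw [hsq, hsin2, hcos]; ring
  have hnn : 0 ≤ ‖1 - Complex.exp (θ * Complex.I)‖ := norm_nonneg _
  nlinarith [key, hnn, hs]

lemma sum_inv_sin (n : ℕ) (hn : 2 ≤ n) :
    ∑ j ∈ Finset.Ico 1 n, 1 / Real.sin (π * j / n) ≤ 2 * n * Real.log n := by
  have h1 : ∑ j ∈ Finset.Ico 1 n, 1 / Real.sin (π * j / n)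
      ≤ ∑ j ∈ Finset.Ico 1 n, (n:ℝ)/2 * (1/j + 1/(n-j:ℕ)) := by
    apply Finset.sum_le_sum
    intro j hj
    rw [Finset.mem_Ico] at hj
    exact inv_sin_le n j hj.1 hj.2
  have hrefl : ∑ j ∈ Finset.Ico 1 n, (1:ℝ)/((n-j:ℕ):ℝ) = ∑ j ∈ Finset.Ico 1 n, (1:ℝ)/j := by
    rw [Finset.sum_Ico_eq_sum_range, Finset.sum_Ico_eq_sum_range]
    rw [← Finset.sum_range_reflect]
    apply Finset.sum_congr rfl
    intro i hi
    rw [Finset.mem_range] at hi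
    congr 2
    omega
  have hsplit : ∑ j ∈ Finset.Ico 1 n, (n:ℝ)/2 * (1/j + 1/(n-j:ℕ))
      = (n:ℝ) * ∑ j ∈ Finset.Ico 1 n, (1:ℝ)/j := by
    rw [← Finset.mul_sum]
    rw [Finset.sum_add_distrib, hrefl]
    ring
  have hharm : ∑ j ∈ Finset.Ico 1 n, (1:ℝ)/j ≤ 1 + Real.log (n-1:ℕ) := by
    have := harm_le (n-1) (by omega)
    have he : (n-1)+1 = n := by omega
    rwa [he] at this
  have hfin : 1 + Real.log (n-1:ℕ) ≤ 2 * Real.log n := by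
    rcases eq_or_lt_of_le hn with h2 | h3
    · rw [← h2]
      norm_num
      have := Real.log_two_gt_d9
      linarith
    · have hn3 : 3 ≤ n := h3
      have hlog1 : 1 ≤ Real.log n := by
        rw [Real.le_log_iff_exp_le (by positivity)]
        have := Real.exp_one_lt_d9
        have : (3:ℝ) ≤ n := by exact_mod_cast hn3
        linarith [Real.exp_one_lt_d9]
      have hmono : Real.log (n-1:ℕ) ≤ Real.log n := by
        have hp : (0:ℝ) < ((n-1:ℕ):ℝ) := by
          have : 0 < n - 1 := by omega
          exact_mod_cast this
        apply Real.log_le_log hp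
        have : n - 1 ≤ n := by omega
        exact_mod_cast this
      linarith
  calc ∑ j ∈ Finset.Ico 1 n, 1 / Real.sin (π * j / n)
      ≤ (n:ℝ) * ∑ j ∈ Finset.Ico 1 n, (1:ℝ)/j := by rw [← hsplit]; exact h1
    _ ≤ (n:ℝ) * (1 + Real.log (n-1:ℕ)) := by
        apply mul_le_mul_of_nonneg_left hharm (by positivity)
    _ ≤ (n:ℝ) * (2 * Real.log n) := by
        apply mul_le_mul_of_nonneg_left hfin (by positivity)
    _ = 2 * n * Real.log n := by ring

lemma abel_bound (z : ℂ) (hz : ‖z‖ = 1) (hz1 : z ≠ 1) (t d : ℕ) (ht : 1 ≤ t) :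
    ‖∑ h ∈ Finset.range t, ((h:ℂ)+1)^d * z^h‖
      ≤ (2*(t:ℝ)^d - 1) * (2 / ‖1 - z‖) := by
  set f : ℕ → ℂ := fun h => ((h:ℂ)+1)^d with hf
  set g : ℕ → ℂ := fun h => z^h with hg
  have h1z : (0:ℝ) < ‖1 - z‖ := by
    rw [norm_pos_iff]
    intro h
    exact hz1 (by linear_combination -h)
  have hM0 : (0:ℝ) ≤ 2 / ‖1 - z‖ := by positivity
  have hM : ∀ k : ℕ, ‖∑ i ∈ Finset.range k, g i‖ ≤ 2 / ‖1 - z‖ := by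
    intro k
    have he : ∑ i ∈ Finset.range k, g i = (z^k - 1)/(z - 1) := geom_sum_eq hz1 k
    rw [he, norm_div, norm_sub_rev z 1]
    gcongr
    calc ‖z^k - 1‖ ≤ ‖z^k‖ + ‖(1:ℂ)‖ := norm_sub_le _ _
      _ = 2 := by rw [norm_pow, hz]; norm_num
  have hparts : ∑ h ∈ Finset.range t, f h * g h
      = f (t-1) * (∑ i ∈ Finset.range t, g i)
        - ∑ i ∈ Finset.range (t-1), (f (i+1) - f i) * (∑ j ∈ Finset.range (i+1), g j) := by
    simpa [smul_eq_mul] using Finset.sum_range_by_parts f g t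
  have hdiff : ∀ i : ℕ, ‖f (i+1) - f i‖ = ((i:ℝ)+2)^d - ((i:ℝ)+1)^d := by
    intro i
    have hmono : ((i:ℝ)+1)^d ≤ ((i:ℝ)+2)^d := by
      apply pow_le_pow_left₀ (by positivity) (by linarith) d
    have he : f (i+1) - f i = ((((i:ℝ)+2)^d - ((i:ℝ)+1)^d : ℝ) : ℂ) := by
      simp only [hf]; push_cast; ring
    rw [he, Complex.norm_real, Real.norm_eq_abs, abs_of_nonneg (by linarith)]
  have hb1 : ‖f (t-1) * (∑ i ∈ Finset.range t, g i)‖ ≤ (t:ℝ)^d * (2 / ‖1 - z‖) := by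
    rw [norm_mul]
    have hft : ‖f (t-1)‖ = (t:ℝ)^d := by
      have he : f (t-1) = ((t:ℕ):ℂ)^d := by
        simp only [hf]
        congr 1
        push_cast [Nat.cast_sub ht]
        ring
      rw [he, norm_pow, Complex.norm_natCast]
    rw [hft]
    exact mul_le_mul_of_nonneg_left (hM t) (by positivity)
  have hb2 : ‖∑ i ∈ Finset.range (t-1), (f (i+1) - f i) * (∑ j ∈ Finset.range (i+1), g j)‖
      ≤ ((t:ℝ)^d - 1) * (2 / ‖1 - z‖) := by
    refine (norm_sum_le _ _).trans ?_
    have hterm : ∀ i ∈ Finset.range (t-1),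
        ‖(f (i+1) - f i) * (∑ j ∈ Finset.range (i+1), g j)‖
        ≤ (((i:ℝ)+2)^d - ((i:ℝ)+1)^d) * (2 / ‖1 - z‖) := by
      intro i _
      rw [norm_mul, hdiff i]
      exact mul_le_mul_of_nonneg_left (hM _) (by
        have : ((i:ℝ)+1)^d ≤ ((i:ℝ)+2)^d :=
          pow_le_pow_left₀ (by positivity) (by linarith) d
        linarith)
    refine (Finset.sum_le_sum hterm).trans ?_
    rw [← Finset.sum_mul]
    apply mul_le_mul_of_nonneg_right ?_ hM0
    have htel := Finset.sum_range_sub (f := fun i => ((i:ℝ)+1)^d) (t-1)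
    have hsum : ∑ i ∈ Finset.range (t-1), (((i:ℝ)+2)^d - ((i:ℝ)+1)^d)
        = (((t-1:ℕ):ℝ)+1)^d - 1 := by
      calc ∑ i ∈ Finset.range (t-1), (((i:ℝ)+2)^d - ((i:ℝ)+1)^d)
          = ∑ i ∈ Finset.range (t-1), (((((i+1:ℕ)):ℝ)+1)^d - ((i:ℝ)+1)^d) := by
            apply Finset.sum_congr rfl
            intro i _
            push_cast
            ring_nf
        _ = (((t-1:ℕ):ℝ)+1)^d - (((0:ℕ):ℝ)+1)^d := htel
        _ = (((t-1:ℕ):ℝ)+1)^d - 1 := by norm_num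
    rw [hsum]
    have : ((t-1:ℕ):ℝ) + 1 = (t:ℝ) := by
      push_cast [Nat.cast_sub ht]
      ring
    rw [this]
  calc ‖∑ h ∈ Finset.range t, f h * g h‖
      = ‖f (t-1) * (∑ i ∈ Finset.range t, g i)
          - ∑ i ∈ Finset.range (t-1), (f (i+1) - f i) * (∑ j ∈ Finset.range (i+1), g j)‖ := by
        rw [hparts]
    _ ≤ ‖f (t-1) * (∑ i ∈ Finset.range t, g i)‖
        + ‖∑ i ∈ Finset.range (t-1), (f (i+1) - f i) * (∑ j ∈ Finset.range (i+1), g j)‖ :=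
        norm_sub_le _ _
    _ ≤ (t:ℝ)^d * (2 / ‖1 - z‖) + ((t:ℝ)^d - 1) * (2 / ‖1 - z‖) := add_le_add hb1 hb2
    _ = (2*(t:ℝ)^d - 1) * (2 / ‖1 - z‖) := by ring

theorem weighted_root_of_unity_full_sum_bound (n : ℕ) (hn : 2 ≤ n) (t d : ℕ)
    (ht : 1 ≤ t) :
    ∑ j ∈ Finset.range n,
      ‖∑ h ∈ Finset.range t,
        ((h : ℂ) + 1) ^ d * Complex.exp (2 * Real.pi * Complex.I * j / n) ^ h‖
      ≤ (t : ℝ) ^ (d + 1) + 2 ^ (d + 1) * (t : ℝ) ^ d * n * Real.log n := by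
  have hn0 : 0 < n := by omega
  have hnR : (0:ℝ) < n := by exact_mod_cast hn0
  rw [Finset.range_eq_Ico, Finset.sum_eq_sum_Ico_succ_bot hn0]
  have h0 : ‖∑ h ∈ Finset.range t,
      ((h : ℂ) + 1) ^ d * Complex.exp (2 * Real.pi * Complex.I * (0:ℕ) / n) ^ h‖
      ≤ (t : ℝ) ^ (d + 1) := by
    simp only [Nat.cast_zero, mul_zero, zero_div, Complex.exp_zero, one_pow, mul_one]
    refine (norm_sum_le _ _).trans ?_
    have hb : ∀ h ∈ Finset.range t, ‖((h:ℂ)+1)^d‖ ≤ (t:ℝ)^d := by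
      intro h hh
      rw [Finset.mem_range] at hh
      rw [norm_pow]
      apply pow_le_pow_left₀ (norm_nonneg _) ?_ d
      have he : ((h:ℂ)+1) = ((h+1:ℕ):ℂ) := by push_cast; ring
      rw [he, Complex.norm_natCast]
      exact_mod_cast hh
    refine (Finset.sum_le_sum hb).trans ?_
    rw [Finset.sum_const, Finset.card_range, nsmul_eq_mul, pow_succ]
    ring_nf
    exact le_refl _
  have hIco : ∀ j ∈ Finset.Ico 1 n,
      ‖∑ h ∈ Finset.range t,
        ((h : ℂ) + 1) ^ d * Complex.exp (2 * Real.pi * Complex.I * j / n) ^ h‖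
      ≤ 2^d * (t:ℝ)^d * (1 / Real.sin (π * j / n)) := by
    intro j hj
    rw [Finset.mem_Ico] at hj
    obtain ⟨hj1, hjn⟩ := hj
    have hjR : (0:ℝ) < j := by exact_mod_cast hj1
    have hjnR : (j:ℝ) < n := by exact_mod_cast hjn
    set θ : ℝ := 2*π*j/n with hθ
    have hzeq : Complex.exp (2 * Real.pi * Complex.I * j / n)
        = Complex.exp ((θ:ℂ) * Complex.I) := by
      congr 1
      rw [hθ]
      push_cast
      ring
    have hθpos : 0 < θ := by
      have := Real.pi_pos
      positivity
    have hθlt : θ < 2*π := by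
      rw [hθ, div_lt_iff₀ hnR]
      have := Real.pi_pos
      nlinarith
    have hhalf : θ/2 = π*j/n := by rw [hθ]; ring
    have hsinpos : 0 < Real.sin (π*j/n) := by
      apply Real.sin_pos_of_pos_of_lt_pi
      · have := Real.pi_pos; positivity
      · rw [div_lt_iff₀ hnR]
        have := Real.pi_pos
        nlinarith
    have hz1 : Complex.exp ((θ:ℂ) * Complex.I) ≠ 1 := by
      intro h
      rw [Complex.exp_eq_one_iff] at h
      obtain ⟨k, hk⟩ := h
      have hI : (Complex.I) ≠ 0 := Complex.I_ne_zero
      have hc : (θ:ℂ) = (k:ℂ) * (2*(π:ℝ)) := by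
        apply mul_right_cancel₀ hI
        linear_combination hk
      have hr : θ = (k:ℝ) * (2*π) := by
        have : (θ:ℂ) = (((k:ℝ) * (2*π) : ℝ):ℂ) := by push_cast; push_cast at hc; exact hc
        exact_mod_cast this
      have hπ := Real.pi_pos
      have hk0 : (0:ℝ) < (k:ℝ) := by nlinarith
      have hk1 : (k:ℝ) < 1 := by nlinarith
      have : (0:ℤ) < k := by exact_mod_cast hk0
      have : k < 1 := by exact_mod_cast hk1
      omega
    have hznorm : ‖Complex.exp ((θ:ℂ) * Complex.I)‖ = 1 :=
      Complex.norm_exp_ofReal_mul_I θ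
    have habel := abel_bound _ hznorm hz1 t d ht
    have hnorm1z : ‖1 - Complex.exp ((θ:ℂ) * Complex.I)‖ = 2 * Real.sin (π*j/n) := by
      rw [norm_one_sub_exp θ (by rw [hhalf]; exact le_of_lt hsinpos), hhalf]
    rw [hnorm1z] at habel
    rw [hzeq]
    refine habel.trans ?_
    have hs := hsinpos
    have h2s : 2 / (2 * Real.sin (π*j/n)) = 1 / Real.sin (π*j/n) := by
      field_simp
    rw [h2s]
    apply mul_le_mul_of_nonneg_right ?_ (by positivity)
    have htR : (1:ℝ) ≤ (t:ℝ) := by exact_mod_cast ht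
    have ht1 : (1:ℝ) ≤ (t:ℝ)^d := by
      calc (1:ℝ) = 1^d := (one_pow d).symm
        _ ≤ (t:ℝ)^d := pow_le_pow_left₀ (by norm_num) htR d
    rcases Nat.eq_zero_or_pos d with hd | hd
    · subst hd; norm_num
    · have h2d : (2:ℝ) ≤ 2^d := by
        calc (2:ℝ) = 2^1 := by norm_num
          _ ≤ 2^d := by
            apply pow_le_pow_right₀ (by norm_num) hd
      nlinarith
  have hsum : ∑ j ∈ Finset.Ico 1 n,
      ‖∑ h ∈ Finset.range t,
        ((h : ℂ) + 1) ^ d * Complex.exp (2 * Real.pi * Complex.I * j / n) ^ h‖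
      ≤ 2^(d+1) * (t:ℝ)^d * n * Real.log n := by
    refine (Finset.sum_le_sum hIco).trans ?_
    rw [← Finset.mul_sum]
    calc (2:ℝ)^d * (t:ℝ)^d * ∑ j ∈ Finset.Ico 1 n, 1 / Real.sin (π * j / n)
        ≤ 2^d * (t:ℝ)^d * (2 * n * Real.log n) :=
          mul_le_mul_of_nonneg_left (sum_inv_sin n hn) (by positivity)
      _ = 2^(d+1) * (t:ℝ)^d * n * Real.log n := by ring
  exact add_le_add h0 hsum
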